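/- Let K be a field of characteristic 0 and U a nonempty finite subset of ℤ with 2k ≤ |U|. For every d with 2d ≤ k and every homogeneous polynomial f ∈ P_U of degree d, if (Σ_{e ∈ C(U,2)} x_e)^{k-2d} · f lies in Ann(Φ_{U,k}), then f lies in Ann(Φ_{U,k}); i.e., multiplication by l^{k-2d} with l = Σ_{e ∈ C(U,2)} x_e is injective from the degree-d component of A_{U,k} = P_U/Ann(Φ_{U,k}) to the degree-(k−d) component. -/

import Mathlib

open MvPolynomial Finset

noncomputable section

/-- The set of matchings with exactly `k` edges of the complete graph on vertex set `V ⊆ ℤ`: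
sets of `k` pairwise disjoint 2-element subsets of `V`. -/
def matchings (V : Finset ℤ) (k : ℕ) : Finset (Finset (Finset ℤ)) :=
  (V.powersetCard 2).powerset.filter fun M =>
    M.card = k ∧ ∀ e ∈ M, ∀ f ∈ M, e ≠ f → Disjoint e f

/-- `S` is a matching of the complete graph on vertex set `V`. -/
def IsMatching (V : Finset ℤ) (S : Finset (Finset ℤ)) : Prop :=
  S ⊆ V.powersetCard 2 ∧ ∀ e ∈ S, ∀ f ∈ S, e ≠ f → Disjoint e f

/-- The weighted generating function `Φ_{V,k} = Σ_{M ∈ M(V,k)} x^M` of `k`-edge matchings,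
an element of the polynomial ring with variables indexed by (potential) edges. -/
def Phi (K : Type*) [Field K] (V : Finset ℤ) (k : ℕ) : MvPolynomial (Finset ℤ) K :=
  ∑ M ∈ matchings V k, ∏ e ∈ M, X e

/-- The differential operator `∂^S = Π_{i ∈ S} ∂/∂x_i` applied to `p`. -/
def dset {K : Type*} [CommSemiring K] {ι : Type*} [DecidableEq ι]
    (S : Finset ι) (p : MvPolynomial ι K) : MvPolynomial ι K :=
  S.toList.foldr (fun i q => pderiv i q) p

/-- The differential operator `∂^m = Π_i (∂/∂x_i)^{m i}` of a monomial exponent `m`. -/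
def dmon {K : Type*} [CommSemiring K] {ι : Type*} [DecidableEq ι]
    (m : ι →₀ ℕ) (p : MvPolynomial ι K) : MvPolynomial ι K :=
  m.support.toList.foldr (fun i q => (⇑(pderiv (R := K) i))^[m i] q) p

/-- The linear map `f ↦ f(∂)Φ`, where `f(∂)` is obtained from `f` by substituting
`∂/∂x_i` for `x_i`. -/
def diffOp (K : Type*) [Field K] {ι : Type*} [DecidableEq ι]
    (Φ : MvPolynomial ι K) : MvPolynomial ι K →ₗ[K] MvPolynomial ι K :=
  (basisMonomials ι K).constr K fun m => dmon m Φ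

/-- The annihilator `Ann(Φ) = {f : f(∂)Φ = 0}`. -/
def Ann (K : Type*) [Field K] {ι : Type*} [DecidableEq ι]
    (Φ : MvPolynomial ι K) : Submodule K (MvPolynomial ι K) :=
  LinearMap.ker (diffOp K Φ)

/-- The canonical matching `M(V) = {{v₁,v₂},{v₃,v₄},…}` on `V = {v₁ < v₂ < ⋯}`. -/
def canonMatching (V : Finset ℤ) : Finset (Finset ℤ) :=
  (Finset.range (V.card / 2)).image fun i =>
    ({(V.sort (· ≤ ·)).getD (2 * i) 0, (V.sort (· ≤ ·)).getD (2 * i + 1) 0} : Finset ℤ)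

/-- The `n`-th elementary symmetric polynomial in the variables indexed by `U`. -/
def elemSymm (K : Type*) [Field K] {ι : Type*} (U : Finset ι) (n : ℕ) : MvPolynomial ι K :=
  ∑ S ∈ U.powersetCard n, ∏ i ∈ S, X i

end

set_option linter.unusedSectionVars false
set_option linter.unusedVariables false

noncomputable section LefAux
namespace Lef

variable {K : Type*} [Field K] {ι : Type*} [DecidableEq ι]

theorem pderiv_comm (i j : ι) (p : MvPolynomial ι K) :
    pderiv i (pderiv j p) = pderiv j (pderiv i p) := by
  induction p using MvPolynomial.induction_on with
  | C a => simp [pderiv_C]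
  | add p q hp hq => simp [map_add, hp, hq]
  | mul_X p n ih =>
      have h1 : ∀ a b : ι,
          (pderiv (R := K) a) (Pi.single (M := fun _ => MvPolynomial ι K) b 1 n) = 0 := by
        intro a b
        rcases eq_or_ne n b with rfl | hnb
        · simp [Pi.single_eq_same, pderiv_one]
        · simp [Pi.single_eq_of_ne hnb]
      simp only [pderiv_mul, map_add, pderiv_X, ih, h1]
      ring

theorem iter_comm (i j : ι) (a b : ℕ) (p : MvPolynomial ι K) :
    (⇑(pderiv (R := K) i))^[a] ((⇑(pderiv (R := K) j))^[b] p) =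
      (⇑(pderiv (R := K) j))^[b] ((⇑(pderiv (R := K) i))^[a] p) := by
  have h : Function.Commute (⇑(pderiv (R := K) i)) (⇑(pderiv (R := K) j)) :=
    fun q => pderiv_comm i j q
  exact ((h.iterate_left a).iterate_right b) p

def listD (m : ι →₀ ℕ) (l : List ι) (p : MvPolynomial ι K) : MvPolynomial ι K :=
  l.foldr (fun i q => (⇑(pderiv (R := K) i))^[m i] q) p

theorem dmon_eq_listD (m : ι →₀ ℕ) (p : MvPolynomial ι K) :
    dmon m p = listD m m.support.toList p := rfl

@[simp] theorem listD_nil (m : ι →₀ ℕ) (p : MvPolynomial ι K) : listD m [] p = p := rfl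

@[simp] theorem listD_cons (m : ι →₀ ℕ) (a : ι) (t : List ι) (p : MvPolynomial ι K) :
    listD m (a :: t) p = (⇑(pderiv (R := K) a))^[m a] (listD m t p) := rfl

theorem listD_congr {m m' : ι →₀ ℕ} (l : List ι) (h : ∀ i ∈ l, m i = m' i)
    (p : MvPolynomial ι K) : listD m l p = listD m' l p := by
  induction l with
  | nil => rfl
  | cons a t ih =>
      rw [listD_cons, listD_cons, ih (fun i hi => h i (List.mem_cons_of_mem a hi)),
        h a (List.mem_cons_self)]

theorem listD_perm (m : ι →₀ ℕ) {l₁ l₂ : List ι} (h : l₁.Perm l₂) (p : MvPolynomial ι K) :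
    listD m l₁ p = listD m l₂ p := by
  haveI : LeftCommutative (fun (i : ι) (q : MvPolynomial ι K) => (⇑(pderiv (R := K) i))^[m i] q) :=
    ⟨fun a b q => iter_comm a b _ _ q⟩
  exact h.foldr_eq p

theorem listD_pderiv (m : ι →₀ ℕ) (l : List ι) (e : ι) (p : MvPolynomial ι K) :
    listD m l (pderiv e p) = pderiv e (listD m l p) := by
  induction l with
  | nil => rfl
  | cons a t ih =>
      rw [listD_cons, listD_cons, ih]
      have := iter_comm (K := K) a e (m a) 1 (listD m t p)
      simpa using this

theorem listD_filter (m : ι →₀ ℕ) (l : List ι) (p : MvPolynomial ι K) :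
    listD m l p = listD m (l.filter fun i => m i ≠ 0) p := by
  induction l with
  | nil => rfl
  | cons a t ih =>
      by_cases h : m a = 0
      · rw [listD_cons, h, Function.iterate_zero_apply, ih]
        congr 1
        simp [List.filter_cons, h]
      · rw [listD_cons, ih]
        have : (a :: t).filter (fun i => m i ≠ 0) = a :: t.filter (fun i => m i ≠ 0) := by
          simp [List.filter_cons, h]
        rw [this, listD_cons]

theorem listD_eq_dmon (m : ι →₀ ℕ) {l : List ι} (hl : l.Nodup)
    (hs : m.support ⊆ l.toFinset) (p : MvPolynomial ι K) : listD m l p = dmon m p := by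
  rw [listD_filter, dmon_eq_listD, listD_filter m m.support.toList]
  apply listD_perm
  apply List.perm_of_nodup_nodup_toFinset_eq (hl.filter _) ((m.support.nodup_toList).filter _)
  ext i
  simp only [List.toFinset_filter, Finset.mem_filter, List.mem_toFinset, Finset.mem_toList,
    Finsupp.mem_support_iff, decide_eq_true_eq]
  constructor
  · rintro ⟨-, h2⟩; exact ⟨h2, h2⟩
  · rintro ⟨h1, h2⟩
    refine ⟨?_, h2⟩
    have : i ∈ m.support := by simpa [Finsupp.mem_support_iff] using h2
    simpa using hs this

theorem dmon_single_add (e : ι) (m : ι →₀ ℕ) (p : MvPolynomial ι K) :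
    dmon (m + Finsupp.single e 1) p = dmon m (pderiv e p) := by
  classical
  set l₀ : List ι := (m.support.erase e).toList with hl₀
  have hel₀ : e ∉ l₀ := by simp [hl₀]
  have hnd₀ : l₀.Nodup := Finset.nodup_toList _
  have hnd : (e :: l₀).Nodup := by simp [hel₀, hnd₀]
  have htf : (e :: l₀).toFinset = insert e (m.support.erase e) := by
    rw [List.toFinset_cons, hl₀, Finset.toList_toFinset]
  have hsub : m.support ⊆ (e :: l₀).toFinset := by
    rw [htf]; intro i hi
    rcases eq_or_ne i e with rfl | hne
    · exact Finset.mem_insert_self _ _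
    · exact Finset.mem_insert_of_mem (Finset.mem_erase.2 ⟨hne, hi⟩)
  have hsub' : (m + Finsupp.single e 1).support ⊆ (e :: l₀).toFinset := by
    refine subset_trans Finsupp.support_add ?_
    rw [htf]
    apply Finset.union_subset
    · exact fun i hi => htf ▸ hsub hi
    · intro i hi
      have : i = e := by simpa using Finsupp.support_single_subset hi
      exact this ▸ Finset.mem_insert_self _ _
  have key0 : ∀ i ∈ l₀, (m + Finsupp.single e 1 : ι →₀ ℕ) i = m i := by
    intro i hi
    have hne : i ≠ e := fun h => hel₀ (h ▸ hi)
    simp [Finsupp.single_apply, hne.symm, Ne.symm hne]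
  calc dmon (m + Finsupp.single e 1) p
      = listD (m + Finsupp.single e 1) (e :: l₀) p := (listD_eq_dmon _ hnd hsub' p).symm
    _ = (⇑(pderiv (R := K) e))^[m e + 1] (listD (m + Finsupp.single e 1) l₀ p) := by
        rw [listD_cons]; congr 1; simp [Finsupp.single_apply]
    _ = (⇑(pderiv (R := K) e))^[m e + 1] (listD m l₀ p) := by
        rw [listD_congr l₀ key0]
    _ = (⇑(pderiv (R := K) e))^[m e] (pderiv e (listD m l₀ p)) := by
        rw [Function.iterate_succ_apply]
    _ = (⇑(pderiv (R := K) e))^[m e] (listD m l₀ (pderiv e p)) := by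
        rw [listD_pderiv]
    _ = listD m (e :: l₀) (pderiv e p) := rfl
    _ = dmon m (pderiv e p) := listD_eq_dmon m hnd hsub _

theorem iter_add (i : ι) (n : ℕ) (p q : MvPolynomial ι K) :
    (⇑(pderiv (R := K) i))^[n] (p + q) =
      (⇑(pderiv (R := K) i))^[n] p + (⇑(pderiv (R := K) i))^[n] q := by
  induction n generalizing p q with
  | zero => rfl
  | succ n ih => simp only [Function.iterate_succ_apply, map_add, ih]

theorem iter_smul (i : ι) (n : ℕ) (c : K) (p : MvPolynomial ι K) :
    (⇑(pderiv (R := K) i))^[n] (c • p) = c • (⇑(pderiv (R := K) i))^[n] p := by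
  induction n generalizing p with
  | zero => rfl
  | succ n ih => simp only [Function.iterate_succ_apply, Derivation.map_smul, ih]

theorem iter_zero (i : ι) (n : ℕ) :
    (⇑(pderiv (R := K) i))^[n] (0 : MvPolynomial ι K) = 0 := by
  induction n with
  | zero => rfl
  | succ n ih => rw [Function.iterate_succ_apply, map_zero, ih]

theorem listD_add (m : ι →₀ ℕ) (l : List ι) (p q : MvPolynomial ι K) :
    listD m l (p + q) = listD m l p + listD m l q := by
  induction l with
  | nil => rfl
  | cons a t ih => rw [listD_cons, ih, iter_add]; rfl

theorem listD_smul (m : ι →₀ ℕ) (l : List ι) (c : K) (p : MvPolynomial ι K) :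
    listD m l (c • p) = c • listD m l p := by
  induction l with
  | nil => rfl
  | cons a t ih => rw [listD_cons, ih, iter_smul]; rfl

theorem listD_zero (m : ι →₀ ℕ) (l : List ι) :
    listD m l (0 : MvPolynomial ι K) = 0 := by
  induction l with
  | nil => rfl
  | cons a t ih => rw [listD_cons, ih, iter_zero]

theorem dmon_add (m : ι →₀ ℕ) (p q : MvPolynomial ι K) :
    dmon m (p + q) = dmon m p + dmon m q := listD_add _ _ _ _

theorem dmon_smul (m : ι →₀ ℕ) (c : K) (p : MvPolynomial ι K) :
    dmon m (c • p) = c • dmon m p := listD_smul _ _ _ _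

theorem dmon_zero (m : ι →₀ ℕ) : dmon m (0 : MvPolynomial ι K) = 0 := listD_zero _ _

theorem dmon_sum {α : Type*} (m : ι →₀ ℕ) (s : Finset α) (g : α → MvPolynomial ι K) :
    dmon m (∑ a ∈ s, g a) = ∑ a ∈ s, dmon m (g a) := by
  classical
  induction s using Finset.induction_on with
  | empty => simpa using dmon_zero m
  | @insert _ _ hx ih => rw [Finset.sum_insert hx, Finset.sum_insert hx, dmon_add, ih]
theorem degree_add' (a b : ι →₀ ℕ) : (a + b).degree = a.degree + b.degree := by
  rw [Finsupp.degree_eq_weight_one, map_add]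

theorem degree_single_one (e : ι) : (Finsupp.single e 1 : ι →₀ ℕ).degree = 1 := by
  simp [Finsupp.degree_apply, Finsupp.support_single_ne_zero e (one_ne_zero)]

theorem sub_single_add (m : ι →₀ ℕ) (e : ι) (he : m e ≠ 0) :
    (m - Finsupp.single e 1) + Finsupp.single e 1 = m := by
  ext i
  rcases eq_or_ne i e with rfl | hne
  · simp only [Finsupp.add_apply, Finsupp.tsub_apply, Finsupp.single_apply, if_pos rfl,
      if_true, eq_self_iff_true]
    omega
  · simp [Finsupp.single_apply, Ne.symm hne]

theorem dmon_monomial_sqfree_aux (n : ℕ) (m u : ι →₀ ℕ) (hn : m.degree = n)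
    (hu : ∀ i, u i ≤ 1) :
    dmon m (monomial u (1 : K)) =
      if m ≤ u then monomial (u - m) (1 : K) else 0 := by
  classical
  induction n generalizing m u with
  | zero =>
      have hm : m = 0 := (Finsupp.degree_eq_zero_iff m).1 hn
      subst hm
      rw [if_pos (zero_le : (0 : ι →₀ ℕ) ≤ u), tsub_zero]
      have h0 : (0 : ι →₀ ℕ).support.toList = [] := by simp
      rw [dmon_eq_listD, h0]
      rfl
  | succ n ih =>
      have hm0 : m ≠ 0 := by
        intro h; rw [h, map_zero] at hn; exact (Nat.succ_ne_zero n) hn.symm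
      obtain ⟨e, he⟩ : ∃ e, m e ≠ 0 := by
        by_contra hc
        push_neg at hc
        exact hm0 (Finsupp.ext fun i => hc i)
      set m' : ι →₀ ℕ := m - Finsupp.single e 1 with hm'
      have hme : m' + Finsupp.single e 1 = m := sub_single_add m e he
      have hdeg : m'.degree = n := by
        have := degree_add' m' (Finsupp.single e 1)
        rw [hme, hn, degree_single_one] at this
        omega
      have step : dmon m (monomial u (1 : K)) = dmon m' (pderiv e (monomial u (1 : K))) := by
        rw [← hme, dmon_single_add]
      rw [step, pderiv_monomial, one_mul]
      rcases Nat.lt_or_ge (u e) 1 with hue | hue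
      · -- u e = 0
        have hue0 : u e = 0 := by omega
        have : ((u e : K)) = 0 := by rw [hue0]; simp
        rw [this, map_zero, dmon_zero]
        have : ¬ m ≤ u := by
          intro hle
          have := hle e
          omega
        rw [if_neg this]
      · -- u e = 1
        have hue1 : u e = 1 := le_antisymm (hu e) hue
        have hcast : ((u e : K)) = 1 := by rw [hue1]; simp
        rw [hcast]
        have hu' : ∀ i, (u - Finsupp.single e 1 : ι →₀ ℕ) i ≤ 1 := by
          intro i
          simp only [Finsupp.tsub_apply]
          exact le_trans (Nat.sub_le _ _) (hu i)
        rw [ih m' (u - Finsupp.single e 1) hdeg hu']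
        have hiff : m' ≤ u - Finsupp.single e 1 ↔ m ≤ u := by
          constructor
          · intro hle i
            have h1 := hle i
            have h2 := hle e
            rcases eq_or_ne i e with rfl | hne
            · simp only [hm'] at h2 ⊢
              simp only [Finsupp.tsub_apply, Finsupp.single_apply, if_pos rfl] at h2 ⊢
              simp at h2 ⊢
              omega
            · simpa [hm', Finsupp.tsub_apply, Finsupp.single_apply, Ne.symm hne] using h1
          · intro hle i
            have h1 := hle i
            have h2 := hle e
            rcases eq_or_ne i e with rfl | hne
            · simp only [hm']
              simp only [Finsupp.tsub_apply, Finsupp.single_apply]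
              simp
              omega
            · simpa [hm', Finsupp.tsub_apply, Finsupp.single_apply, Ne.symm hne] using h1
        by_cases hle : m ≤ u
        · rw [if_pos (hiff.2 hle), if_pos hle]
          have hsub : (u - Finsupp.single e 1) - m' = u - m := by
            ext i
            have h2 := hle e
            rcases eq_or_ne i e with rfl | hne
            · simp only [hm']
              simp only [Finsupp.tsub_apply, Finsupp.single_apply]
              simp
              omega
            · simp [hm', Finsupp.tsub_apply, Finsupp.single_apply, Ne.symm hne]
          rw [hsub]
        · rw [if_neg (fun hc => hle (hiff.1 hc)), if_neg hle]

theorem dmon_monomial_sqfree (m u : ι →₀ ℕ) (hu : ∀ i, u i ≤ 1) :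
    dmon m (monomial u (1 : K)) =
      if m ≤ u then monomial (u - m) (1 : K) else 0 :=
  dmon_monomial_sqfree_aux m.degree m u rfl hu

theorem diffOp_apply (Φ f : MvPolynomial ι K) :
    diffOp K Φ f = (AddMonoidAlgebra.coeff f).sum fun m c => c • dmon m Φ := by
  rw [diffOp, Module.Basis.constr_apply]
  rfl

theorem diffOp_monomial_one (Φ : MvPolynomial ι K) (m : ι →₀ ℕ) :
    diffOp K Φ (monomial m 1) = dmon m Φ := by
  have h := (basisMonomials ι K).constr_basis K (fun m => dmon m Φ) m
  rw [diffOp]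
  rw [show ((basisMonomials ι K) m : MvPolynomial ι K) = monomial m 1 by
    rw [coe_basisMonomials]] at h
  exact h

theorem diffOp_add_Phi (Φ Ψ f : MvPolynomial ι K) :
    diffOp K (Φ + Ψ) f = diffOp K Φ f + diffOp K Ψ f := by
  rw [diffOp_apply, diffOp_apply, diffOp_apply, ← Finsupp.sum_add]
  apply Finsupp.sum_congr
  intro m _
  rw [dmon_add, smul_add]

theorem diffOp_smul_Phi (c : K) (Φ f : MvPolynomial ι K) :
    diffOp K (c • Φ) f = c • diffOp K Φ f := by
  rw [diffOp_apply, diffOp_apply, Finsupp.smul_sum]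
  apply Finsupp.sum_congr
  intro m _
  rw [dmon_smul, smul_comm]

theorem diffOp_X_mul (e : ι) (Φ g : MvPolynomial ι K) :
    diffOp K Φ (X e * g) = diffOp K (pderiv e Φ) g := by
  have h : (diffOp K Φ).comp (LinearMap.mulLeft K (X e : MvPolynomial ι K)) =
      diffOp K (pderiv e Φ) := by
    apply (basisMonomials ι K).ext
    intro m
    rw [coe_basisMonomials]
    simp only [LinearMap.comp_apply, LinearMap.mulLeft_apply]
    have hX : (X e : MvPolynomial ι K) * monomial m 1 = monomial (m + Finsupp.single e 1) 1 := by
      rw [X, monomial_mul, one_mul, add_comm]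
    rw [hX, diffOp_monomial_one, diffOp_monomial_one, dmon_single_add]
  exact LinearMap.congr_fun h g
/-! ### eps : finsets of variables as squarefree exponents -/

def eps (M : Finset ι) : ι →₀ ℕ := ∑ e ∈ M, Finsupp.single e 1

theorem eps_apply (M : Finset ι) (i : ι) : eps M i = if i ∈ M then 1 else 0 := by
  classical
  rw [eps, Finsupp.finset_sum_apply]
  simp [Finsupp.single_apply, Finset.sum_ite_eq]

theorem eps_sqfree (M : Finset ι) (i : ι) : eps M i ≤ 1 := by
  rw [eps_apply]; split <;> omega

theorem eps_support (M : Finset ι) : (eps M).support = M := by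
  ext i
  rw [Finsupp.mem_support_iff, eps_apply]
  split <;> simp_all

theorem eps_inj {M N : Finset ι} (h : eps M = eps N) : M = N := by
  rw [← eps_support M, ← eps_support N, h]

theorem eps_mono {S M : Finset ι} (h : S ⊆ M) : eps S ≤ eps M := by
  intro i
  rw [eps_apply, eps_apply]
  by_cases hi : i ∈ S
  · rw [if_pos hi, if_pos (h hi)]
  · rw [if_neg hi]; omega

theorem le_eps {m : ι →₀ ℕ} {M : Finset ι} (h : m ≤ eps M) :
    m = eps m.support ∧ m.support ⊆ M := by
  constructor
  · ext i
    rw [eps_apply]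
    have := h i
    rw [eps_apply] at this
    by_cases hi : i ∈ m.support
    · rw [if_pos hi]
      have h1 : m i ≠ 0 := Finsupp.mem_support_iff.1 hi
      have h2 := h i
      rw [eps_apply] at h2
      by_cases hM : i ∈ M
      · rw [if_pos hM] at h2; omega
      · rw [if_neg hM] at h2; omega
    · rw [if_neg hi]
      simpa [Finsupp.mem_support_iff] using hi
  · intro i hi
    have h1 : m i ≠ 0 := Finsupp.mem_support_iff.1 hi
    have := h i
    rw [eps_apply] at this
    by_contra hc
    rw [if_neg hc] at this
    omega

theorem eps_sdiff {S M : Finset ι} (h : S ⊆ M) : eps M - eps S = eps (M \ S) := by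
  ext i
  simp only [Finsupp.tsub_apply, eps_apply, Finset.mem_sdiff]
  by_cases hS : i ∈ S
  · rw [if_pos hS, if_pos (h hS), if_neg (by simp [hS])]
  · rw [if_neg hS]
    by_cases hM : i ∈ M
    · rw [if_pos hM, if_pos ⟨hM, hS⟩]
    · rw [if_neg hM, if_neg (by simp [hM])]

theorem eps_degree (M : Finset ι) : (eps M).degree = M.card := by
  rw [Finsupp.degree_apply, eps_support]
  rw [Finset.card_eq_sum_ones]
  apply Finset.sum_congr rfl
  intro i hi
  rw [eps_apply, if_pos hi]

theorem prod_X_eps (M : Finset ι) : (∏ e ∈ M, (X e : MvPolynomial ι K)) = monomial (eps M) 1 := by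
  classical
  induction M using Finset.induction_on with
  | empty => simp [eps]
  | @insert a s hx ih =>
      rw [Finset.prod_insert hx, ih, X, monomial_mul, one_mul]
      have hins : eps (insert a s) = Finsupp.single a 1 + eps s := by
        rw [eps, eps, Finset.sum_insert hx]
      rw [hins]

theorem dmon_eps (m : ι →₀ ℕ) (M : Finset ι) :
    dmon m (monomial (eps M) (1 : K)) =
      if m ≤ eps M then monomial (eps M - m) (1 : K) else 0 :=
  dmon_monomial_sqfree m (eps M) (eps_sqfree M)

/-! ### diffOp and multiplication by powers of l -/

theorem diffOp_zero_Phi (f : MvPolynomial ι K) : diffOp K (0 : MvPolynomial ι K) f = 0 := by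
  rw [diffOp_apply]
  simp [dmon_zero]

theorem diffOp_sum_Phi {α : Type*} (s : Finset α) (Φ : α → MvPolynomial ι K)
    (f : MvPolynomial ι K) :
    diffOp K (∑ a ∈ s, Φ a) f = ∑ a ∈ s, diffOp K (Φ a) f := by
  classical
  induction s using Finset.induction_on with
  | empty => simpa using diffOp_zero_Phi f
  | @insert _ _ hx ih =>
      rw [Finset.sum_insert hx, Finset.sum_insert hx, diffOp_add_Phi, ih]

theorem diffOp_lsum_mul (E : Finset ι) (Φ g : MvPolynomial ι K) :
    diffOp K Φ ((∑ e ∈ E, X e) * g) = diffOp K (∑ e ∈ E, pderiv e Φ) g := by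
  rw [Finset.sum_mul, map_sum, diffOp_sum_Phi]
  apply Finset.sum_congr rfl
  intro e _
  exact diffOp_X_mul e Φ g

def DOp (E : Finset ι) (Φ : MvPolynomial ι K) : MvPolynomial ι K := ∑ e ∈ E, pderiv e Φ

theorem DOp_smul (E : Finset ι) (c : K) (Φ : MvPolynomial ι K) :
    DOp E (c • Φ) = c • DOp E Φ := by
  rw [DOp, DOp, Finset.smul_sum]
  apply Finset.sum_congr rfl
  intro e _
  exact Derivation.map_smul _ _ _

theorem diffOp_lpow_mul (E : Finset ι) (j : ℕ) (Φ f : MvPolynomial ι K) :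
    diffOp K Φ ((∑ e ∈ E, X e) ^ j * f) = diffOp K ((DOp E)^[j] Φ) f := by
  induction j generalizing Φ with
  | zero => simp
  | succ j ih =>
      rw [pow_succ', mul_assoc, diffOp_lsum_mul, ← DOp, ih, Function.iterate_succ_apply]
/-! ### matchings -/

def verts (S : Finset (Finset ℤ)) : Finset ℤ := S.biUnion id

theorem mem_verts {S : Finset (Finset ℤ)} {a : ℤ} : a ∈ verts S ↔ ∃ e ∈ S, a ∈ e := by
  simp [verts]

theorem subset_verts {S : Finset (Finset ℤ)} {e : Finset ℤ} (he : e ∈ S) : e ⊆ verts S :=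
  fun a ha => mem_verts.2 ⟨e, he, ha⟩

theorem mem_matchings {V : Finset ℤ} {k : ℕ} {M : Finset (Finset ℤ)} :
    M ∈ matchings V k ↔
      M ⊆ V.powersetCard 2 ∧ M.card = k ∧ ∀ e ∈ M, ∀ f ∈ M, e ≠ f → Disjoint e f := by
  rw [matchings, Finset.mem_filter, Finset.mem_powerset]

theorem edge_card {V : Finset ℤ} {e : Finset ℤ} (he : e ∈ V.powersetCard 2) :
    e ⊆ V ∧ e.card = 2 := by
  rwa [Finset.mem_powersetCard] at he

theorem verts_subset {V : Finset ℤ} {S : Finset (Finset ℤ)} (h : S ⊆ V.powersetCard 2) :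
    verts S ⊆ V := by
  intro a ha
  obtain ⟨e, heS, hae⟩ := mem_verts.1 ha
  exact (edge_card (h heS)).1 hae

theorem card_verts {V : Finset ℤ} {k : ℕ} {M : Finset (Finset ℤ)} (hM : M ∈ matchings V k) :
    (verts M).card = 2 * k := by
  obtain ⟨hsub, hcard, hdisj⟩ := mem_matchings.1 hM
  rw [verts, show (M.biUnion id) = M.biUnion (fun e => e) from rfl,
    Finset.card_biUnion (fun e he f hf hef => hdisj e he f hf hef)]
  rw [← hcard, Finset.card_eq_sum_ones M, Finset.mul_sum]
  apply Finset.sum_congr rfl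
  intro e he
  simp [(edge_card (hsub he)).2]

theorem disjoint_verts_iff {S T : Finset (Finset ℤ)} :
    Disjoint (verts S) (verts T) ↔ ∀ e ∈ S, ∀ f ∈ T, Disjoint e f := by
  rw [verts, verts, Finset.disjoint_biUnion_left]
  constructor
  · intro h e he f hf
    have := h e he
    rw [Finset.disjoint_biUnion_right] at this
    exact this f hf
  · intro h e he
    rw [Finset.disjoint_biUnion_right]
    exact fun f hf => h e he f hf

theorem submatching {V : Finset ℤ} {k : ℕ} {M S : Finset (Finset ℤ)}
    (hM : M ∈ matchings V k) (hS : S ⊆ M) : S ∈ matchings V S.card := by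
  obtain ⟨hsub, hcard, hdisj⟩ := mem_matchings.1 hM
  exact mem_matchings.2 ⟨subset_trans hS hsub, rfl,
    fun e he f hf hef => hdisj e (hS he) f (hS hf) hef⟩

theorem edge_nonempty {V : Finset ℤ} {e : Finset ℤ} (he : e ∈ V.powersetCard 2) :
    e.Nonempty := by
  rw [← Finset.card_pos, (edge_card he).2]; omega

theorem disjoint_edgesets {V : Finset ℤ} {S N : Finset (Finset ℤ)}
    (hS : S ⊆ V.powersetCard 2)
    (hdisj : Disjoint (verts S) (verts N)) : Disjoint S N := by
  rw [Finset.disjoint_left]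
  intro e heS heN
  obtain ⟨a, ha⟩ := edge_nonempty (hS heS)
  exact Finset.disjoint_left.1 hdisj (subset_verts heS ha) (subset_verts heN ha)

theorem union_matching {V : Finset ℤ} {a b : ℕ} {S N : Finset (Finset ℤ)}
    (hS : S ∈ matchings V a) (hN : N ∈ matchings V b)
    (hdisj : Disjoint (verts S) (verts N)) : S ∪ N ∈ matchings V (a + b) := by
  obtain ⟨hsub1, hcard1, hdisj1⟩ := mem_matchings.1 hS
  obtain ⟨hsub2, hcard2, hdisj2⟩ := mem_matchings.1 hN
  refine mem_matchings.2 ⟨Finset.union_subset hsub1 hsub2, ?_, ?_⟩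
  · rw [Finset.card_union_of_disjoint (disjoint_edgesets hsub1 hdisj), hcard1, hcard2]
  · intro e he f hf hef
    rcases Finset.mem_union.1 he with he1 | he1 <;> rcases Finset.mem_union.1 hf with hf1 | hf1
    · exact hdisj1 e he1 f hf1 hef
    · exact disjoint_verts_iff.1 hdisj e he1 f hf1
    · exact (disjoint_verts_iff.1 hdisj f hf1 e he1).symm
    · exact hdisj2 e he1 f hf1 hef

theorem sdiff_verts_disjoint {V : Finset ℤ} {k : ℕ} {M S : Finset (Finset ℤ)}
    (hM : M ∈ matchings V k) (hS : S ⊆ M) : Disjoint (verts S) (verts (M \ S)) := by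
  obtain ⟨hsub, hcard, hdisj⟩ := mem_matchings.1 hM
  rw [disjoint_verts_iff]
  intro e he f hf
  have hfM : f ∈ M := (Finset.sdiff_subset) hf
  have hne : e ≠ f := by
    intro h
    exact (Finset.mem_sdiff.1 hf).2 (h ▸ he)
  exact hdisj e (hS he) f hfM hne

theorem exists_matching_of_card {V : Finset ℤ} :
    ∀ (d : ℕ) (W : Finset ℤ), W ⊆ V → W.card = 2 * d →
      ∃ T, T ∈ matchings V d ∧ verts T = W := by
  intro d
  induction d with
  | zero =>
      intro W _ hW
      refine ⟨∅, mem_matchings.2 ⟨Finset.empty_subset _, rfl, by simp⟩, ?_⟩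
      have : W = ∅ := Finset.card_eq_zero.1 (by omega)
      simp [verts, this]
  | succ d ih =>
      intro W hWV hW
      have h2 : 2 ≤ W.card := by omega
      obtain ⟨a, ha⟩ : W.Nonempty := Finset.card_pos.1 (by omega)
      have hW' : (W.erase a).Nonempty := by
        rw [← Finset.card_pos, Finset.card_erase_of_mem ha]
        omega
      obtain ⟨b, hb⟩ := hW'
      have hab : a ≠ b := fun h => (Finset.mem_erase.1 hb).1 h.symm
      have hbW : b ∈ W := (Finset.mem_erase.1 hb).2
      set W' : Finset ℤ := W \ {a, b} with hW'def
      have hW'sub : W' ⊆ V := subset_trans (Finset.sdiff_subset) hWV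
      have habW : ({a, b} : Finset ℤ) ⊆ W := by
        intro x hx
        rcases Finset.mem_insert.1 hx with rfl | hx
        · exact ha
        · rwa [Finset.mem_singleton.1 hx]
      have hcardab : ({a, b} : Finset ℤ).card = 2 := Finset.card_pair hab
      have hW'card : W'.card = 2 * d := by
        rw [hW'def, Finset.card_sdiff_of_subset habW, hcardab, hW]
        omega
      obtain ⟨T', hT', hvT'⟩ := ih W' hW'sub hW'card
      have habV : ({a, b} : Finset ℤ) ∈ V.powersetCard 2 :=
        Finset.mem_powersetCard.2 ⟨subset_trans habW hWV, hcardab⟩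
      have habnotin : ({a, b} : Finset ℤ) ∉ T' := by
        intro hmem
        have : ({a, b} : Finset ℤ) ⊆ W' := hvT' ▸ subset_verts hmem
        have := this (Finset.mem_insert_self a {b})
        rw [hW'def, Finset.mem_sdiff] at this
        exact this.2 (Finset.mem_insert_self a {b})
      have hdisjab : ∀ f ∈ T', Disjoint ({a, b} : Finset ℤ) f := by
        intro f hf
        rw [Finset.disjoint_left]
        intro x hx hxf
        have hxW' : x ∈ W' := hvT' ▸ subset_verts hf hxf
        rw [hW'def, Finset.mem_sdiff] at hxW'
        exact hxW'.2 hx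
      refine ⟨insert ({a, b} : Finset ℤ) T', ?_, ?_⟩
      · obtain ⟨hsub, hcard, hdisj⟩ := mem_matchings.1 hT'
        refine mem_matchings.2 ⟨?_, ?_, ?_⟩
        · exact Finset.insert_subset habV hsub
        · rw [Finset.card_insert_of_notMem habnotin, hcard]
        · intro e he f hf hef
          rcases Finset.mem_insert.1 he with rfl | he1
          · rcases Finset.mem_insert.1 hf with rfl | hf1
            · exact absurd rfl hef
            · exact hdisjab f hf1
          · rcases Finset.mem_insert.1 hf with rfl | hf1
            · exact (hdisjab e he1).symm
            · exact hdisj e he1 f hf1 hef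
      · rw [verts, Finset.biUnion_insert, ← verts, hvT']
        rw [hW'def]
        simp only [id]
        rw [Finset.union_sdiff_of_subset habW]
/-! ### expansion of diffOp applied to Phi -/

theorem Phi_eq (Kv : Type*) [Field Kv] (V : Finset ℤ) (j : ℕ) :
    Phi Kv V j = ∑ M ∈ matchings V j, monomial (eps M) (1 : Kv) := by
  rw [Phi]
  exact Finset.sum_congr rfl fun M _ => prod_X_eps M

variable {Kv : Type*} [Field Kv]

theorem expand (V : Finset ℤ) (j : ℕ) (f : MvPolynomial (Finset ℤ) Kv) :
    diffOp Kv (Phi Kv V j) f =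
      ∑ M ∈ matchings V j, ∑ S ∈ M.powerset,
        f.coeff (eps S) • monomial (eps (M \ S)) (1 : Kv) := by
  rw [Phi_eq, diffOp_apply]
  rw [MvPolynomial.sum_def]
  have step1 : ∀ m ∈ f.support,
      (f.coeff m) • dmon m (∑ M ∈ matchings V j, monomial (eps M) (1 : Kv)) =
      ∑ M ∈ matchings V j,
        if m ≤ eps M then f.coeff m • monomial (eps M - m) (1 : Kv) else 0 := by
    intro m _
    rw [dmon_sum, Finset.smul_sum]
    apply Finset.sum_congr rfl
    intro M _
    rw [dmon_eps]
    split <;> simp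
  refine (Finset.sum_congr rfl step1).trans ?_
  rw [Finset.sum_comm]
  apply Finset.sum_congr rfl
  intro M _
  rw [← Finset.sum_filter]
  have hAB : f.support.filter (fun m => m ≤ eps M) ⊆ M.powerset.image eps := by
    intro m hm
    obtain ⟨hm1, hm2⟩ := Finset.mem_filter.1 hm
    obtain ⟨hmeq, hsub⟩ := le_eps hm2
    exact Finset.mem_image.2 ⟨m.support, Finset.mem_powerset.2 hsub, hmeq.symm⟩
  have hzero : ∀ x ∈ M.powerset.image eps, x ∉ f.support.filter (fun m => m ≤ eps M) →
      f.coeff x • monomial (eps M - x) (1 : Kv) = 0 := by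
    intro x hx hxA
    obtain ⟨S, hS, rfl⟩ := Finset.mem_image.1 hx
    have hle : eps S ≤ eps M := eps_mono (Finset.mem_powerset.1 hS)
    have hns : eps S ∉ f.support := fun hmem => hxA (Finset.mem_filter.2 ⟨hmem, hle⟩)
    rw [MvPolynomial.notMem_support_iff.1 hns]
    simp
  rw [Finset.sum_subset hAB hzero]
  rw [Finset.sum_image (fun S _ T _ h => eps_inj h)]
  apply Finset.sum_congr rfl
  intro S hS
  rw [eps_sdiff (Finset.mem_powerset.1 hS)]

theorem coeff_expand (V : Finset ℤ) (j : ℕ) (f : MvPolynomial (Finset ℤ) Kv)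
    (μ : (Finset ℤ) →₀ ℕ) :
    MvPolynomial.coeff μ (diffOp Kv (Phi Kv V j) f) =
      ∑ M ∈ matchings V j, ∑ S ∈ M.powerset,
        if eps (M \ S) = μ then f.coeff (eps S) else 0 := by
  rw [expand, MvPolynomial.coeff_sum]
  apply Finset.sum_congr rfl
  intro M _
  rw [MvPolynomial.coeff_sum]
  apply Finset.sum_congr rfl
  intro S _
  rw [MvPolynomial.coeff_smul, MvPolynomial.coeff_monomial]
  split <;> simp [mul_comm]

theorem pair_sum (V : Finset ℤ) (j : ℕ) (f : MvPolynomial (Finset ℤ) Kv)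
    (N : Finset (Finset ℤ)) (hN : N ∈ matchings V N.card) (hNj : N.card ≤ j) :
    (∑ M ∈ matchings V j, ∑ S ∈ M.powerset,
        if M \ S = N then f.coeff (eps S) else 0) =
      ∑ S ∈ (matchings V (j - N.card)).filter (fun S => Disjoint (verts S) (verts N)),
        f.coeff (eps S) := by
  classical
  rw [Finset.sum_sigma']
  rw [← Finset.sum_filter]
  apply Finset.sum_nbij' (fun x => x.2)
    (fun S => (⟨S ∪ N, S⟩ : Σ _M : Finset (Finset ℤ), Finset (Finset ℤ)))
  · -- hi
    rintro ⟨M, S⟩ hx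
    rw [Finset.mem_filter, Finset.mem_sigma] at hx
    obtain ⟨⟨hM, hS⟩, hMS⟩ := hx
    have hSM : S ⊆ M := Finset.mem_powerset.1 hS
    have hMcard : M.card = j := (mem_matchings.1 hM).2.1
    have hScard : S.card = j - N.card := by
      have h1 : (M \ S).card = M.card - S.card := Finset.card_sdiff_of_subset hSM
      have h2 : S.card ≤ M.card := Finset.card_le_card hSM
      rw [hMS] at h1
      omega
    refine Finset.mem_filter.2 ⟨?_, ?_⟩
    · have := submatching hM hSM
      rwa [hScard] at this
    · have := sdiff_verts_disjoint hM hSM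
      rwa [hMS] at this
  · -- hj
    intro S hS
    rw [Finset.mem_filter] at hS
    obtain ⟨hSm, hdisj⟩ := hS
    have hU : S ∪ N ∈ matchings V (j - N.card + N.card) := union_matching hSm hN hdisj
    have hj' : j - N.card + N.card = j := by omega
    rw [hj'] at hU
    have hdisjSN : Disjoint S N := disjoint_edgesets (mem_matchings.1 hSm).1 hdisj
    refine Finset.mem_filter.2
      ⟨Finset.mem_sigma.2 ⟨hU, Finset.mem_powerset.2 Finset.subset_union_left⟩, ?_⟩
    exact Finset.union_sdiff_cancel_left hdisjSN
  · -- left_inv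
    rintro ⟨M, S⟩ hx
    rw [Finset.mem_filter, Finset.mem_sigma] at hx
    obtain ⟨⟨hM, hS⟩, hMS⟩ := hx
    have hSM : S ⊆ M := Finset.mem_powerset.1 hS
    have huni : S ∪ N = M := by
      rw [← hMS, Finset.union_sdiff_of_subset hSM]
    simp [huni]
  · -- right_inv
    intro S hS
    rfl
  · -- h
    rintro ⟨M, S⟩ hx
    rfl
/-! ### the combinatorial core -/

def Fsum (V : Finset ℤ) (d : ℕ) (g : Finset (Finset ℤ) → Kv) (W : Finset ℤ) : Kv :=
  ∑ S ∈ (matchings V d).filter (fun S => Disjoint (verts S) W), g S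

def Hsum (V : Finset ℤ) (d : ℕ) (g : Finset (Finset ℤ) → Kv) (A : Finset ℤ) : Kv :=
  ∑ S ∈ (matchings V d).filter (fun S => A ⊆ verts S), g S

theorem neg_one_sum {α : Type*} [DecidableEq α] (s : Finset α) :
    (∑ B ∈ s.powerset, (-1 : Kv) ^ B.card) = if s = ∅ then 1 else 0 := by
  have h := Finset.sum_powerset_neg_one_pow_card (x := s)
  have hcast : (∑ B ∈ s.powerset, (-1 : Kv) ^ B.card) =
      ((∑ B ∈ s.powerset, (-1 : ℤ) ^ B.card : ℤ) : Kv) := by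
    push_cast
    rfl
  rw [hcast, h]
  split <;> simp

theorem count_lemma (V : Finset ℤ) (d : ℕ) {S : Finset (Finset ℤ)} {W : Finset ℤ}
    (hSV : verts S ⊆ V) (hScard : (verts S).card = 2 * d)
    (hWV : W ⊆ V) (hWd : W.card ≤ 2 * d) (hdisj : Disjoint (verts S) W) :
    ((V.powersetCard (2 * d)).filter (fun W' => W ⊆ W' ∧ Disjoint (verts S) W')).card =
      (V.card - 2 * d - W.card).choose (2 * d - W.card) := by
  classical
  have hkey : ((V.powersetCard (2 * d)).filter
      (fun W' => W ⊆ W' ∧ Disjoint (verts S) W')).card =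
      (((V \ verts S) \ W).powersetCard (2 * d - W.card)).card := by
    apply Finset.card_bij' (fun W' _ => W' \ W) (fun B _ => B ∪ W)
    · intro W' hW'
      rw [Finset.mem_filter, Finset.mem_powersetCard] at hW'
      obtain ⟨⟨hsub, hcard⟩, hWW', hdisj'⟩ := hW'
      rw [Finset.mem_powersetCard]
      constructor
      · intro x hx
        rw [Finset.mem_sdiff] at hx
        rw [Finset.mem_sdiff, Finset.mem_sdiff]
        exact ⟨⟨hsub hx.1, fun hvx => Finset.disjoint_right.1 hdisj' hx.1 hvx⟩, hx.2⟩
      · rw [Finset.card_sdiff_of_subset hWW', hcard]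
    · intro B hB
      rw [Finset.mem_powersetCard] at hB
      obtain ⟨hBsub, hBcard⟩ := hB
      have hBV : B ⊆ V := fun x hx => (Finset.mem_sdiff.1 (Finset.mem_sdiff.1 (hBsub hx)).1).1
      have hBW : Disjoint B W := by
        rw [Finset.disjoint_left]
        intro x hx hxW
        exact (Finset.mem_sdiff.1 (hBsub hx)).2 hxW
      have hBS : Disjoint (verts S) B := by
        rw [Finset.disjoint_right]
        intro x hx hxS
        exact (Finset.mem_sdiff.1 (Finset.mem_sdiff.1 (hBsub hx)).1).2 hxS
      rw [Finset.mem_filter, Finset.mem_powersetCard]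
      refine ⟨⟨Finset.union_subset hBV hWV, ?_⟩, Finset.subset_union_right, ?_⟩
      · rw [Finset.card_union_of_disjoint hBW, hBcard]
        omega
      · rw [Finset.disjoint_union_right]
        exact ⟨hBS, hdisj⟩
    · intro W' hW'
      rw [Finset.mem_filter] at hW'
      exact Finset.sdiff_union_of_subset hW'.2.1
    · intro B hB
      rw [Finset.mem_powersetCard] at hB
      have hBW : Disjoint B W := by
        rw [Finset.disjoint_left]
        intro x hx hxW
        exact (Finset.mem_sdiff.1 (hB.1 hx)).2 hxW
      rw [Finset.union_sdiff_cancel_right hBW]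
  rw [hkey, Finset.card_powersetCard]
  congr 1
  have hWsub : W ⊆ V \ verts S := fun x hx => Finset.mem_sdiff.2
    ⟨hWV hx, fun hxS => Finset.disjoint_left.1 hdisj hxS hx⟩
  rw [Finset.card_sdiff_of_subset hWsub, Finset.card_sdiff_of_subset hSV, hScard]
theorem Fsum_small {V : Finset ℤ} {d : ℕ} {g : Finset (Finset ℤ) → Kv} [CharZero Kv]
    (h4d : 4 * d ≤ V.card)
    (hyp : ∀ W' ⊆ V, W'.card = 2 * d → Fsum V d g W' = 0) :
    ∀ W ⊆ V, W.card ≤ 2 * d → Fsum V d g W = 0 := by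
  intro W hWV hWd
  classical
  set c : ℕ := (V.card - 2 * d - W.card).choose (2 * d - W.card) with hc
  have hcpos : 0 < c := Nat.choose_pos (by omega)
  set A : Finset (Finset ℤ) := (V.powersetCard (2 * d)).filter (fun W' => W ⊆ W') with hA
  have key : ∑ W' ∈ A, Fsum V d g W' = (c : Kv) * Fsum V d g W := by
    unfold Fsum
    have h1 : ∀ W' ∈ A, (∑ S ∈ (matchings V d).filter (fun S => Disjoint (verts S) W'), g S)
        = ∑ S ∈ matchings V d, if Disjoint (verts S) W' then g S else 0 := by
      intro W' _
      rw [Finset.sum_filter]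
    rw [Finset.sum_congr rfl h1, Finset.sum_comm]
    have h2 : ∀ S ∈ matchings V d,
        (∑ W' ∈ A, if Disjoint (verts S) W' then g S else 0) =
        if Disjoint (verts S) W then (c : Kv) * g S else 0 := by
      intro S hS
      have hSV : verts S ⊆ V := verts_subset (mem_matchings.1 hS).1
      have hScard : (verts S).card = 2 * d := card_verts hS
      rw [← Finset.sum_filter, Finset.sum_const]
      rw [hA, Finset.filter_filter]
      by_cases hdS : Disjoint (verts S) W
      · rw [if_pos hdS]
        rw [count_lemma V d hSV hScard hWV hWd hdS, ← hc, nsmul_eq_mul]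
      · rw [if_neg hdS]
        have hempty : (V.powersetCard (2 * d)).filter
            (fun W' => W ⊆ W' ∧ Disjoint (verts S) W') = ∅ := by
          rw [Finset.filter_eq_empty_iff]
          rintro W' _ ⟨hWW', hdW'⟩
          exact hdS (hdW'.mono_right hWW')
        rw [hempty, Finset.card_empty, zero_smul]
    rw [Finset.sum_congr rfl h2, ← Finset.sum_filter, Finset.mul_sum]
  have hzero : ∑ W' ∈ A, Fsum V d g W' = 0 := by
    apply Finset.sum_eq_zero
    intro W' hW'
    rw [hA, Finset.mem_filter, Finset.mem_powersetCard] at hW'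
    exact hyp W' hW'.1.1 hW'.1.2
  rw [hzero] at key
  have hcK : (c : Kv) ≠ 0 := Nat.cast_ne_zero.2 hcpos.ne'
  rcases mul_eq_zero.1 key.symm with h | h
  · exact absurd h hcK
  · exact h

theorem Fsum_eq_powerset_Hsum (V : Finset ℤ) (d : ℕ) (g : Finset (Finset ℤ) → Kv)
    (A : Finset ℤ) :
    Fsum V d g A = ∑ B ∈ A.powerset, (-1 : Kv) ^ B.card * Hsum V d g B := by
  classical
  unfold Fsum Hsum
  have h1 : ∀ B ∈ A.powerset,
      (-1 : Kv) ^ B.card * ∑ S ∈ (matchings V d).filter (fun S => B ⊆ verts S), g S =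
      ∑ S ∈ matchings V d, if B ⊆ verts S then (-1 : Kv) ^ B.card * g S else 0 := by
    intro B _
    rw [Finset.mul_sum, ← Finset.sum_filter]
  rw [Finset.sum_congr rfl h1, Finset.sum_comm]
  have h2 : ∀ S ∈ matchings V d,
      (∑ B ∈ A.powerset, if B ⊆ verts S then (-1 : Kv) ^ B.card * g S else 0) =
      if Disjoint (verts S) A then g S else 0 := by
    intro S hS
    rw [← Finset.sum_filter]
    have hps : A.powerset.filter (fun B => B ⊆ verts S) = (A ∩ verts S).powerset := by
      ext B
      simp only [Finset.mem_filter, Finset.mem_powerset, Finset.subset_inter_iff]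
    rw [hps, ← Finset.sum_mul, neg_one_sum]
    have : (A ∩ verts S = ∅) ↔ Disjoint (verts S) A := by
      rw [← Finset.disjoint_iff_inter_eq_empty, disjoint_comm]
    rcases Classical.em (Disjoint (verts S) A) with hd | hd
    · rw [if_pos (this.2 hd), if_pos hd, one_mul]
    · rw [if_neg (fun hc => hd (this.1 hc)), if_neg hd, zero_mul]
  rw [Finset.sum_congr rfl h2, ← Finset.sum_filter]

theorem Hsum_big {V : Finset ℤ} {d : ℕ} {g : Finset (Finset ℤ) → Kv} {A : Finset ℤ}
    (hA : 2 * d < A.card) : Hsum V d g A = 0 := by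
  unfold Hsum
  classical
  have hempty : (matchings V d).filter (fun S => A ⊆ verts S) = ∅ := by
    rw [Finset.filter_eq_empty_iff]
    intro S hS hsub
    have h1 : A.card ≤ (verts S).card := Finset.card_le_card hsub
    rw [card_verts hS] at h1
    omega
  rw [hempty, Finset.sum_empty]

theorem Hsum_zero {V : Finset ℤ} {d : ℕ} {g : Finset (Finset ℤ) → Kv} [CharZero Kv]
    (h4d : 4 * d ≤ V.card)
    (hFsmall : ∀ W ⊆ V, W.card ≤ 2 * d → Fsum V d g W = 0) :
    ∀ A, A ⊆ V → A.card ≤ 2 * d → Hsum V d g A = 0 := by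
  classical
  intro A
  induction A using Finset.strongInduction with
  | _ A ih =>
    intro hAV hAcard
    have hF : Fsum V d g A = 0 := hFsmall A hAV hAcard
    rw [Fsum_eq_powerset_Hsum] at hF
    have hsplit : ((-1 : Kv) ^ A.card * Hsum V d g A) +
        ∑ B ∈ A.powerset.erase A, (-1 : Kv) ^ B.card * Hsum V d g B =
        ∑ B ∈ A.powerset, (-1 : Kv) ^ B.card * Hsum V d g B :=
      Finset.add_sum_erase A.powerset (fun B => (-1 : Kv) ^ B.card * Hsum V d g B)
        (Finset.mem_powerset_self A)
    have hrest : ∑ B ∈ A.powerset.erase A, (-1 : Kv) ^ B.card * Hsum V d g B = 0 := by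
      apply Finset.sum_eq_zero
      intro B hB
      obtain ⟨hBne, hBps⟩ := Finset.mem_erase.1 hB
      have hBA : B ⊆ A := Finset.mem_powerset.1 hBps
      have hBss : B ⊂ A := Finset.ssubset_iff_subset_ne.2 ⟨hBA, hBne⟩
      rw [ih B hBss (subset_trans hBA hAV)
        (le_trans (Finset.card_le_card hBA) hAcard), mul_zero]
    rw [← hsplit, hrest, add_zero] at hF
    rcases mul_eq_zero.1 hF with h | h
    · exact absurd h (pow_ne_zero _ (neg_ne_zero.2 one_ne_zero))
    · exact h

theorem Fsum_all {V : Finset ℤ} {d : ℕ} {g : Finset (Finset ℤ) → Kv} [CharZero Kv]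
    (h4d : 4 * d ≤ V.card)
    (hyp : ∀ T ∈ matchings V d, Fsum V d g (verts T) = 0) :
    ∀ W ⊆ V, Fsum V d g W = 0 := by
  classical
  have hFsq : ∀ W' ⊆ V, W'.card = 2 * d → Fsum V d g W' = 0 := by
    intro W' hW'V hW'card
    obtain ⟨T, hT, hvT⟩ := exists_matching_of_card d W' hW'V hW'card
    rw [← hvT]
    exact hyp T hT
  have hFsmall := Fsum_small h4d hFsq
  have hH := Hsum_zero h4d hFsmall
  intro W hWV
  rw [Fsum_eq_powerset_Hsum]
  apply Finset.sum_eq_zero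
  intro B hB
  have hBW : B ⊆ W := Finset.mem_powerset.1 hB
  rcases le_or_gt B.card (2 * d) with hle | hlt
  · rw [hH B (subset_trans hBW hWV) hle, mul_zero]
  · rw [Hsum_big hlt, mul_zero]
/-! ### the operator D = Σ ∂_e sends Phi (m+1) to a multiple of Phi m -/

theorem verts_singleton (e : Finset ℤ) : verts {e} = e := by
  simp [verts]

theorem eps_singleton (e : Finset ℤ) : eps {e} = Finsupp.single e 1 := by
  rw [eps, Finset.sum_singleton]

theorem pderiv_eps (e : Finset ℤ) (M : Finset (Finset ℤ)) :
    pderiv e (monomial (eps M) (1 : Kv)) =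
      if e ∈ M then monomial (eps (M \ {e})) (1 : Kv) else 0 := by
  rw [pderiv_monomial, one_mul]
  by_cases he : e ∈ M
  · rw [if_pos he]
    have h1 : eps M e = 1 := by rw [eps_apply, if_pos he]
    have h2 : eps M - Finsupp.single e 1 = eps (M \ {e}) := by
      rw [← eps_singleton, eps_sdiff (Finset.singleton_subset_iff.2 he)]
    rw [h1, h2]
    simp
  · rw [if_neg he]
    have h1 : eps M e = 0 := by rw [eps_apply, if_neg he]
    rw [h1]
    simp

theorem DPhi (V : Finset ℤ) (m : ℕ) (hm : 2 * (m + 1) ≤ V.card) :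
    DOp (V.powersetCard 2) (Phi Kv V (m + 1)) =
      (((V.card - 2 * m).choose 2 : ℕ) : Kv) • Phi Kv V m := by
  classical
  set E := V.powersetCard 2 with hE
  rw [DOp, Phi_eq]
  have h1 : ∀ e ∈ E, pderiv e (∑ M ∈ matchings V (m+1), monomial (eps M) (1 : Kv)) =
      ∑ M ∈ matchings V (m+1), if e ∈ M then monomial (eps (M \ {e})) (1 : Kv) else 0 := by
    intro e _
    rw [map_sum]
    exact Finset.sum_congr rfl fun M _ => pderiv_eps e M
  rw [Finset.sum_congr rfl h1, Finset.sum_comm]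
  have h2 : ∀ M ∈ matchings V (m+1),
      (∑ e ∈ E, if e ∈ M then monomial (eps (M \ {e})) (1 : Kv) else 0) =
      ∑ e ∈ M, monomial (eps (M \ {e})) (1 : Kv) := by
    intro M hM
    rw [← Finset.sum_filter]
    congr 1
    ext e
    simp only [Finset.mem_filter]
    constructor
    · exact fun h => h.2
    · intro h
      exact ⟨(mem_matchings.1 hM).1 h, h⟩
  rw [Finset.sum_congr rfl h2]
  -- reindex pairs (M, e) with e ∈ M  ↔  pairs (N, e) with e disjoint from N
  rw [Finset.sum_sigma']
  have h3 : ∑ x ∈ (matchings V (m+1)).sigma (fun M => M),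
        monomial (eps (x.1 \ {x.2})) (1 : Kv) =
      ∑ y ∈ (matchings V m).sigma (fun N => E.filter (fun e => Disjoint e (verts N))),
        monomial (eps y.1) (1 : Kv) := by
    apply Finset.sum_nbij' (fun x => (⟨x.1 \ {x.2}, x.2⟩ : Σ _N : Finset (Finset ℤ), Finset ℤ))
      (fun y => (⟨insert y.2 y.1, y.2⟩ : Σ _M : Finset (Finset ℤ), Finset ℤ))
    · rintro ⟨M, e⟩ hx
      rw [Finset.mem_sigma] at hx
      obtain ⟨hM, heM⟩ := hx
      have hesub : ({e} : Finset (Finset ℤ)) ⊆ M := Finset.singleton_subset_iff.2 heM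
      have hNm : M \ {e} ∈ matchings V ((M \ {e}).card) := submatching hM Finset.sdiff_subset
      have hcard : (M \ {e}).card = m := by
        rw [Finset.card_sdiff_of_subset hesub, Finset.card_singleton, (mem_matchings.1 hM).2.1]
        omega
      rw [Finset.mem_sigma]
      constructor
      · rwa [hcard] at hNm
      · rw [Finset.mem_filter]
        refine ⟨(mem_matchings.1 hM).1 heM, ?_⟩
        have := sdiff_verts_disjoint hM hesub
        rwa [verts_singleton] at this
    · rintro ⟨N, e⟩ hy
      rw [Finset.mem_sigma, Finset.mem_filter] at hy
      obtain ⟨hN, heE, hdisj⟩ := hy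
      have hsingle : ({e} : Finset (Finset ℤ)) ∈ matchings V 1 := by
        refine mem_matchings.2 ⟨Finset.singleton_subset_iff.2 heE, Finset.card_singleton e, ?_⟩
        intro a ha b hb hab
        rw [Finset.mem_singleton] at ha hb
        exact absurd (ha.trans hb.symm) hab
      have hdisjv : Disjoint (verts {e}) (verts N) := by rwa [verts_singleton]
      have hU := union_matching hsingle hN hdisjv
      rw [Finset.mem_sigma]
      constructor
      · have : ({e} : Finset (Finset ℤ)) ∪ N = insert e N := by
          rw [Finset.insert_eq]
        rw [← this]
        have h1m : 1 + m = m + 1 := Nat.add_comm 1 m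
        rwa [h1m] at hU
      · exact Finset.mem_insert_self e N
    · rintro ⟨M, e⟩ hx
      rw [Finset.mem_sigma] at hx
      obtain ⟨hM, heM⟩ := hx
      have : insert e (M \ {e}) = M := by
        rw [← Finset.erase_eq, Finset.insert_erase heM]
      simp [this]
    · rintro ⟨N, e⟩ hy
      rw [Finset.mem_sigma, Finset.mem_filter] at hy
      obtain ⟨hN, heE, hdisj⟩ := hy
      have heN : e ∉ N := by
        intro hmem
        have hsub : e ⊆ verts N := subset_verts hmem
        obtain ⟨a, ha⟩ := edge_nonempty heE
        exact Finset.disjoint_left.1 hdisj ha (hsub ha)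
      have : insert e N \ {e} = N := by
        rw [← Finset.erase_eq, Finset.erase_insert heN]
      simp [this]
    · rintro ⟨M, e⟩ _
      rfl
  rw [h3, Finset.sum_sigma]
  have h4 : ∀ N ∈ matchings V m,
      (∑ _e ∈ E.filter (fun e => Disjoint e (verts N)), monomial (eps N) (1 : Kv)) =
      (((V.card - 2 * m).choose 2 : ℕ) : Kv) • monomial (eps N) (1 : Kv) := by
    intro N hN
    rw [Finset.sum_const]
    have hfilt : E.filter (fun e => Disjoint e (verts N)) = (V \ verts N).powersetCard 2 := by
      ext e
      rw [Finset.mem_filter, hE, Finset.mem_powersetCard, Finset.mem_powersetCard,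
        Finset.subset_sdiff]
      tauto
    rw [hfilt, Finset.card_powersetCard,
      Finset.card_sdiff_of_subset (verts_subset (mem_matchings.1 hN).1), card_verts hN,
      Nat.cast_smul_eq_nsmul]
  rw [Finset.sum_congr rfl h4, ← Finset.smul_sum, Phi_eq]

theorem DPhi_iter (V : Finset ℤ) :
    ∀ (j m : ℕ), 2 * (m + j) ≤ V.card →
      ∃ c : ℕ, c ≠ 0 ∧ (DOp (V.powersetCard 2))^[j] (Phi Kv V (m + j)) =
        ((c : ℕ) : Kv) • Phi Kv V m := by
  intro j
  induction j with
  | zero =>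
      intro m _
      refine ⟨1, one_ne_zero, ?_⟩
      simp
  | succ j ih =>
      intro m hm
      have hm1 : 2 * ((m + j) + 1) ≤ V.card := by omega
      have hD := DPhi (Kv := Kv) V (m + j) hm1
      have hiter : ∀ (n : ℕ) (c : Kv) (p : MvPolynomial (Finset ℤ) Kv),
          (DOp (V.powersetCard 2))^[n] (c • p) = c • (DOp (V.powersetCard 2))^[n] p := by
        intro n
        induction n with
        | zero => intro c p; rfl
        | succ n ihn =>
            intro c p
            rw [Function.iterate_succ_apply, DOp_smul, ihn, ← Function.iterate_succ_apply]
      obtain ⟨c, hc, hcp⟩ := ih m (by omega)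
      refine ⟨(V.card - 2 * (m + j)).choose 2 * c, ?_, ?_⟩
      · have hpos : 0 < (V.card - 2 * (m + j)).choose 2 := Nat.choose_pos (by omega)
        positivity
      · have hmj : m + (j + 1) = (m + j) + 1 := by omega
        rw [hmj, Function.iterate_succ_apply, hD, hiter, hcp, smul_smul]
        rw [Nat.cast_mul]

end Lef
end LefAux

open Lef

/-- when `2k ≤ |U|`, for every `d` with `2d ≤ k`, multiplication by
`l^{k−2d}` with `l = Σ_e x_e` is injective from the degree-`d` component of
`A_{U,k} = P_U/Ann(Φ_{U,k})` to the degree-`(k−d)` component: if `f` is homogeneous of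
degree `d` and `l^{k−2d}·f ∈ Ann(Φ_{U,k})`, then `f ∈ Ann(Φ_{U,k})`. -/
theorem lefschetz_injective {K : Type*} [Field K] [CharZero K]
    (U : Finset ℤ) (hU : U.Nonempty) (k : ℕ) (hk : 2 * k ≤ U.card)
    (d : ℕ) (hd : 2 * d ≤ k)
    (f : MvPolynomial (Finset ℤ) K) (hf : f.IsHomogeneous d)
    (h : (∑ e ∈ U.powersetCard 2, X e) ^ (k - 2 * d) * f ∈ Ann K (Phi K U k)) :
    f ∈ Ann K (Phi K U k) := by
  classical
  unfold Ann at h ⊢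
  rw [LinearMap.mem_ker] at h ⊢
  -- Step 1: reduce the hypothesis to annihilation of Phi U (2d)
  rw [diffOp_lpow_mul] at h
  obtain ⟨c, hc, hcp⟩ := DPhi_iter (Kv := K) U (k - 2 * d) (2 * d) (by omega)
  have hkey : 2 * d + (k - 2 * d) = k := by omega
  rw [hkey] at hcp
  rw [hcp, diffOp_smul_Phi] at h
  have h2d : diffOp K (Phi K U (2 * d)) f = 0 := by
    rcases smul_eq_zero.1 h with h' | h'
    · exact absurd h' (Nat.cast_ne_zero.2 hc)
    · exact h'
  -- Step 2: extract the coefficient conditions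
  set g : Finset (Finset ℤ) → K := fun S => f.coeff (eps S) with hg
  have hyp0 : ∀ T ∈ matchings U d, Fsum U d g (verts T) = 0 := by
    intro T hT
    have hTcard : T.card = d := (mem_matchings.1 hT).2.1
    have hcoeff := congrArg (MvPolynomial.coeff (eps T)) h2d
    rw [coeff_expand, MvPolynomial.coeff_zero] at hcoeff
    have hconv : (∑ M ∈ matchings U (2 * d), ∑ S ∈ M.powerset,
        if M \ S = T then f.coeff (eps S) else 0) = 0 := by
      refine Eq.trans ?_ hcoeff
      apply Finset.sum_congr rfl
      intro M _
      apply Finset.sum_congr rfl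
      intro S _
      apply if_congr _ rfl rfl
      exact ⟨fun he => by rw [he], fun he => eps_inj he⟩
    have hN : T ∈ matchings U T.card := by rwa [hTcard]
    have hps := pair_sum U (2 * d) f T hN (by omega)
    rw [hconv] at hps
    have harith : 2 * d - T.card = d := by omega
    rw [harith] at hps
    rw [Fsum, hg]
    exact hps.symm
  -- Step 3: the combinatorial core
  have hFall := Fsum_all (V := U) (d := d) (g := g) (by omega) hyp0
  -- Step 4: conclude
  apply MvPolynomial.ext
  intro μ
  rw [coeff_expand, MvPolynomial.coeff_zero]
  by_cases hex : ∃ M ∈ matchings U k, ∃ S ∈ M.powerset, eps (M \ S) = μ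
  · obtain ⟨M₀, hM₀, S₀, hS₀, hμ⟩ := hex
    set N : Finset (Finset ℤ) := M₀ \ S₀ with hNdef
    have hNm : N ∈ matchings U N.card := submatching hM₀ Finset.sdiff_subset
    have hNk : N.card ≤ k := by
      have h1 : N.card ≤ M₀.card := Finset.card_le_card Finset.sdiff_subset
      rw [(mem_matchings.1 hM₀).2.1] at h1
      exact h1
    have hconv : (∑ M ∈ matchings U k, ∑ S ∈ M.powerset,
        if eps (M \ S) = μ then f.coeff (eps S) else 0) =
        ∑ M ∈ matchings U k, ∑ S ∈ M.powerset,
        if M \ S = N then f.coeff (eps S) else 0 := by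
      apply Finset.sum_congr rfl
      intro M _
      apply Finset.sum_congr rfl
      intro S _
      apply if_congr _ rfl rfl
      constructor
      · intro he
        exact eps_inj (he.trans hμ.symm)
      · intro he
        rw [he, hμ]
    rw [hconv, pair_sum U k f N hNm hNk]
    by_cases hkd : k - N.card = d
    · rw [hkd]
      exact hFall (verts N) (verts_subset (mem_matchings.1 hNm).1)
    · apply Finset.sum_eq_zero
      intro S hS
      have hSm := (Finset.mem_filter.1 hS).1
      have hScard : S.card = k - N.card := (mem_matchings.1 hSm).2.1
      apply hf.coeff_eq_zero
      rw [eps_degree, hScard]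
      exact hkd
  · apply Finset.sum_eq_zero
    intro M hM
    apply Finset.sum_eq_zero
    intro S hS
    rw [if_neg]
    exact fun he => hex ⟨M, hM, S, hS, he⟩
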